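/- arXiv:2509.01196 — 4 statements merged into one kernel-verified Lean document; each statement's English description precedes it below -/
import Mathlib

section
/- Let p : ℝ → ℝ be C¹ on [0,∞), nonnegative, nondecreasing, convex, and strictly convex near 1 in the sense that p'(1) > 0. Define e(ρ) = ρ ∫₁^ρ p(s)/s² ds − p(1)(ρ − 1). Then for every ρ* > 1 there exist constants c, C > 0 such that c(ρ − 1)² ≤ e(ρ) ≤ C(ρ − 1)² for all ρ ∈ [0, ρ*]. -/
open Real Set MeasureTheory

lemma myint_linear (a b c : ℝ) :
    ∫ s in a..b, (s - c) = (b - c) ^ 2 / 2 - (a - c) ^ 2 / 2 := by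
  have h : ∀ s ∈ uIcc a b, HasDerivAt (fun t : ℝ => (t - c) ^ 2 / 2) (s - c) s := by
    intro s _
    have h2 := (((hasDerivAt_id s).sub_const c).pow 2).div_const 2
    refine h2.congr_deriv ?_
    push_cast
    simp only [id_eq]
    ring
  rw [intervalIntegral.integral_eq_sub_of_hasDerivAt h
    ((continuous_id.sub continuous_const).intervalIntegrable a b)]

lemma myint_linear' (a b c : ℝ) :
    ∫ s in a..b, (c - s) = (a - c) ^ 2 / 2 - (b - c) ^ 2 / 2 := by
  have h : (fun s : ℝ => c - s) = fun s : ℝ => -(s - c) := by funext s; ring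
  rw [h, intervalIntegral.integral_neg, myint_linear a b c]
  ring

lemma myint_invsq (a b : ℝ) (ha : 0 < a) (hb : 0 < b) :
    ∫ s in a..b, 1 / s ^ 2 = 1 / a - 1 / b := by
  have hpos : ∀ s ∈ uIcc a b, 0 < s := by
    intro s hs
    rcases le_total a b with hab | hab
    · rw [uIcc_of_le hab] at hs; exact lt_of_lt_of_le ha hs.1
    · rw [uIcc_of_ge hab] at hs; exact lt_of_lt_of_le hb hs.1
  have h : ∀ s ∈ uIcc a b, HasDerivAt (fun t : ℝ => -(1 / t)) (1 / s ^ 2) s := by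
    intro s hs
    have hs0 : s ≠ 0 := (hpos s hs).ne'
    have h' := (hasDerivAt_inv hs0).neg
    simp only [neg_neg] at h'
    simp only [one_div]
    exact h'
  have hint : IntervalIntegrable (fun s : ℝ => 1 / s ^ 2) volume a b := by
    apply ContinuousOn.intervalIntegrable
    apply ContinuousOn.div continuousOn_const (continuous_pow 2).continuousOn
    intro x hx
    exact pow_ne_zero 2 (hpos x hx).ne'
  rw [intervalIntegral.integral_eq_sub_of_hasDerivAt h hint]
  ring

set_option maxHeartbeats 2000000

/-- For a nonnegative, nondecreasing, convex C¹ pressure with `p'(1) > 0`, the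
potential energy `e(ρ) = ρ∫₁^ρ p(s)/s² ds − p(1)(ρ−1)` is equivalent to `(ρ−1)²` on any
bounded density range `[0, ρ*]` with `ρ* > 1`. -/
theorem stmt1 (p e : ℝ → ℝ)
    (hp : ContDiffOn ℝ 1 p (Ici 0))
    (hpnn : ∀ s ∈ Ici (0:ℝ), 0 ≤ p s)
    (hpmono : MonotoneOn p (Ici 0))
    (hpconv : ConvexOn ℝ (Ici 0) p)
    (hp'1 : 0 < deriv p 1)
    (he : ∀ ρ : ℝ,
      e ρ = ρ * (∫ s in (1:ℝ)..ρ, p s / s ^ 2) - p 1 * (ρ - 1)) :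
    ∀ ρstar : ℝ, 1 < ρstar → ∃ c C : ℝ, 0 < c ∧ 0 < C ∧
      ∀ ρ ∈ Icc (0:ℝ) ρstar, c * (ρ - 1) ^ 2 ≤ e ρ ∧ e ρ ≤ C * (ρ - 1) ^ 2 := by
  intro ρstar hρs
  have hρs0 : (0:ℝ) < ρstar := lt_trans one_pos hρs
  set d := deriv p 1 with hd
  have hd0 : 0 < d := hp'1
  have hpc : ContinuousOn p (Ici 0) := hp.continuousOn
  have hdiffAt : ∀ x : ℝ, 0 < x → DifferentiableAt ℝ p x := by
    intro x hx
    exact (hp.differentiableOn one_ne_zero).differentiableAt (Ici_mem_nhds hx)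
  have hder : ∀ x : ℝ, 0 < x → HasDerivAt p (deriv p x) x :=
    fun x hx => (hdiffAt x hx).hasDerivAt
  have hmono : ∀ x y : ℝ, 0 < x → x ≤ y → deriv p x ≤ deriv p y := by
    intro x y hx hxy
    rcases eq_or_lt_of_le hxy with rfl | hxy
    · exact le_rfl
    have h1 := hpconv.deriv_le_slope (mem_Ici.2 hx.le)
      (mem_Ici.2 (hx.trans hxy).le) hxy (hdiffAt x hx)
    have h2 := hpconv.slope_le_deriv (mem_Ici.2 hx.le)
      (mem_Ici.2 (hx.trans hxy).le) hxy (hdiffAt y (hx.trans hxy))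
    rw [slope_def_field] at h1 h2
    linarith only [h1, h2]
  -- tangent line inequalities at 1
  have tangentR : ∀ t : ℝ, 1 ≤ t → d * (t - 1) ≤ p t - p 1 := by
    intro t ht
    rcases eq_or_lt_of_le ht with rfl | ht
    · simp
    have h := hpconv.le_slope_of_hasDerivAt (mem_Ici.2 zero_le_one)
      (mem_Ici.2 (by linarith : (0:ℝ) ≤ t)) ht (hder 1 one_pos)
    rw [slope_def_field, le_div_iff₀ (by linarith : (0:ℝ) < t - 1)] at h
    linarith only [h]
  have tangentL : ∀ t : ℝ, 0 ≤ t → t ≤ 1 → p 1 - p t ≤ d * (1 - t) := by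
    intro t ht0 ht
    rcases eq_or_lt_of_le ht with rfl | ht
    · simp
    have h := hpconv.slope_le_deriv (mem_Ici.2 ht0) (mem_Ici.2 zero_le_one) ht
      (hdiffAt 1 one_pos)
    rw [slope_def_field, div_le_iff₀ (by linarith : (0:ℝ) < 1 - t)] at h
    rw [← hd] at h
    linarith only [h]
  -- continuity of deriv p at 1 and choice of δ
  have hcontd : ContinuousAt (deriv p) 1 := by
    have h1 : ContDiffOn ℝ 1 p (Ioi 0) := hp.mono Ioi_subset_Ici_self
    have h2 : ContinuousOn (derivWithin p (Ioi 0)) (Ioi 0) :=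
      h1.continuousOn_derivWithin (uniqueDiffOn_Ioi 0) le_rfl
    have h3 : ContinuousOn (deriv p) (Ioi 0) :=
      h2.congr fun x hx => (derivWithin_of_isOpen isOpen_Ioi hx).symm
    exact h3.continuousAt (isOpen_Ioi.mem_nhds (mem_Ioi.2 one_pos))
  obtain ⟨δ', hδ'0, hδ'⟩ := Metric.continuousAt_iff.1 hcontd (d / 2) (by linarith)
  set δ : ℝ := min (δ' / 2) (1 / 2) with hδdef
  have hδ0 : 0 < δ := lt_min (by linarith) (by norm_num)
  have hδhalf : δ ≤ 1 / 2 := min_le_right _ _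
  have hδle : δ ≤ δ' / 2 := min_le_left _ _
  have hdlow : ∀ s ∈ Icc (1 - δ) 1, d / 2 ≤ deriv p s := by
    intro s hs
    have h1 : dist s 1 < δ' := by
      rw [Real.dist_eq, abs_lt]
      constructor
      · linarith [hs.1]
      · linarith [hs.2]
    have h2 := hδ' h1
    rw [Real.dist_eq, abs_lt] at h2
    have h3 := h2.1
    rw [← hd] at h3
    linarith only [h3]
  -- MVT lower bound near 1
  have hM1 : ∀ s : ℝ, 1 - δ ≤ s → s ≤ 1 → d / 2 * (1 - s) ≤ p 1 - p s := by
    intro s h1 h2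
    rcases eq_or_lt_of_le h2 with rfl | h2
    · simp
    have hs0 : (0:ℝ) < s := by linarith
    obtain ⟨ξ, hξ, hslope⟩ := exists_hasDerivAt_eq_slope p (deriv p) h2
      (hpc.mono fun x hx => le_trans hs0.le hx.1)
      (fun x hx => hder x (lt_trans hs0 hx.1))
    have hξlow : d / 2 ≤ deriv p ξ := hdlow ξ ⟨by linarith [hξ.1], hξ.2.le⟩
    rw [hslope, le_div_iff₀ (by linarith : (0:ℝ) < 1 - s)] at hξlow
    linarith only [hξlow]
  set A := p 1 - p (1 - δ) with hA
  have hAlow : d / 2 * δ ≤ A := by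
    have h := hM1 (1 - δ) le_rfl (by linarith)
    rw [hA]
    calc d / 2 * δ = d / 2 * (1 - (1 - δ)) := by ring
      _ ≤ _ := h
  have hA0 : 0 < A := lt_of_lt_of_le (by positivity) hAlow
  have hpδnn : 0 ≤ p (1 - δ) := hpnn (1 - δ) (mem_Ici.2 (by linarith))
  have hp1 : 0 < p 1 := by rw [hA] at hA0; linarith only [hA0, hpδnn]
  set M := deriv p ρstar with hM
  have hdM : d ≤ M := hmono 1 ρstar one_pos hρs.le
  have hM0 : 0 < M := lt_of_lt_of_le hd0 hdM
  have hM2 : ∀ s : ℝ, 1 ≤ s → s ≤ ρstar → p s - p 1 ≤ M * (s - 1) := by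
    intro s h1 h2
    rcases eq_or_lt_of_le h1 with rfl | h1
    · simp
    have h := hpconv.slope_le_deriv (mem_Ici.2 zero_le_one)
      (mem_Ici.2 (by linarith : (0:ℝ) ≤ s)) h1 (hdiffAt s (by linarith))
    rw [slope_def_field, div_le_iff₀ (by linarith : (0:ℝ) < s - 1)] at h
    have h2' : deriv p s ≤ M := hmono s ρstar (by linarith) h2
    have h3 := mul_le_mul_of_nonneg_right h2' (by linarith : (0:ℝ) ≤ s - 1)
    linarith only [h, h3]
  -- generic integrability
  have hgen : ∀ f : ℝ → ℝ, ContinuousOn f (Ici 0) → ∀ a b : ℝ, 0 < a → 0 < b →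
      IntervalIntegrable (fun s => f s / s ^ 2) volume a b := by
    intro f hf a b ha hb
    have hpos : ∀ s ∈ uIcc a b, 0 < s := by
      intro s hs
      rcases le_total a b with hab | hab
      · rw [uIcc_of_le hab] at hs; exact lt_of_lt_of_le ha hs.1
      · rw [uIcc_of_ge hab] at hs; exact lt_of_lt_of_le hb hs.1
    apply ContinuousOn.intervalIntegrable
    apply ContinuousOn.div (hf.mono fun x hx => (hpos x hx).le)
      (continuous_pow 2).continuousOn
    exact fun x hx => pow_ne_zero 2 (hpos x hx).ne'
  have hcg : ContinuousOn (fun s => p s - p 1) (Ici 0) := hpc.sub continuousOn_const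
  have hch : ContinuousOn (fun s => p 1 - p s) (Ici 0) := continuousOn_const.sub hpc
  -- key identity for ρ > 0
  have hident : ∀ ρ : ℝ, 0 < ρ → e ρ = ρ * ∫ s in (1:ℝ)..ρ, (p s - p 1) / s ^ 2 := by
    intro ρ hρ
    have h1 : ∫ s in (1:ℝ)..ρ, p 1 * (1 / s ^ 2) = p 1 * (1 / 1 - 1 / ρ) := by
      rw [intervalIntegral.integral_const_mul, myint_invsq 1 ρ one_pos hρ]
    have hintc : IntervalIntegrable (fun s : ℝ => p 1 * (1 / s ^ 2)) volume 1 ρ := by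
      have := hgen (fun _ => p 1) continuousOn_const 1 ρ one_pos hρ
      simpa [div_eq_mul_inv] using this
    have h2 : ∫ s in (1:ℝ)..ρ, p s / s ^ 2
        = (∫ s in (1:ℝ)..ρ, (p s - p 1) / s ^ 2)
          + ∫ s in (1:ℝ)..ρ, p 1 * (1 / s ^ 2) := by
      rw [← intervalIntegral.integral_add (hgen _ hcg 1 ρ one_pos hρ) hintc]
      apply intervalIntegral.integral_congr
      intro x hx
      have hx0 : (0:ℝ) < x := by
        rcases le_total 1 ρ with hab | hab
        · rw [uIcc_of_le hab] at hx; linarith [hx.1]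
        · rw [uIcc_of_ge hab] at hx; linarith [hx.1, hρ]
      have hx0' : x ≠ 0 := hx0.ne'
      field_simp
      ring
    rw [he, h2, h1]
    field_simp
    ring
  -- constants
  set c : ℝ := min (d / (2 * ρstar ^ 2)) (min (d / 8) (min (d * δ / 4) (d * δ ^ 2 / 16))) with hc
  set C : ℝ := max (ρstar * M / 2) (max (2 * d) (4 * p 1)) with hCdef
  have hc1 : c ≤ d / (2 * ρstar ^ 2) := min_le_left _ _
  have hc2 : c ≤ d / 8 := le_trans (min_le_right _ _) (min_le_left _ _)
  have hc3 : c ≤ d * δ / 4 :=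
    le_trans (min_le_right _ _) (le_trans (min_le_right _ _) (min_le_left _ _))
  have hc4 : c ≤ d * δ ^ 2 / 16 :=
    le_trans (min_le_right _ _) (le_trans (min_le_right _ _) (min_le_right _ _))
  have hc0 : 0 < c := by
    rw [hc]
    apply lt_min (div_pos hd0 (by positivity))
    apply lt_min (by linarith)
    exact lt_min (div_pos (mul_pos hd0 hδ0) (by norm_num))
      (div_pos (mul_pos hd0 (pow_pos hδ0 2)) (by norm_num))
  have hC0 : 0 < C := lt_max_iff.2 (Or.inr (lt_max_iff.2 (Or.inl (by linarith))))
  refine ⟨c, C, hc0, hC0, ?_⟩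
  have hC1 : ρstar * M / 2 ≤ C := le_max_left _ _
  have hC2 : 2 * d ≤ C := le_trans (le_max_left _ _) (le_max_right _ _)
  have hC3 : 4 * p 1 ≤ C := le_trans (le_max_right _ _) (le_max_right _ _)
  intro ρ hρmem
  obtain ⟨hρ0, hρr⟩ := hρmem
  rcases eq_or_lt_of_le hρ0 with h0 | hρpos
  · -- ρ = 0
    have heval : e ρ = p 1 := by rw [he, ← h0]; ring
    rw [heval, ← h0]
    norm_num
    constructor
    · have hdδ : 0 ≤ d * δ := mul_nonneg hd0.le hδ0.le
      linarith only [hc3, hAlow, hpδnn, hdδ, hA]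
    · linarith only [hC3, hp1]
  rcases le_or_gt 1 ρ with h1ρ | h1ρ
  · -- 1 ≤ ρ ≤ ρstar
    have hint1 : IntervalIntegrable (fun s => (p s - p 1) / s ^ 2) volume 1 ρ :=
      hgen _ hcg 1 ρ one_pos hρpos
    have hlowint : IntervalIntegrable (fun s : ℝ => d / ρstar ^ 2 * (s - 1)) volume 1 ρ :=
      ((continuous_const.mul (continuous_id.sub continuous_const)).intervalIntegrable 1 ρ)
    have hupint : IntervalIntegrable (fun s : ℝ => M * (s - 1)) volume 1 ρ :=
      ((continuous_const.mul (continuous_id.sub continuous_const)).intervalIntegrable 1 ρ)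
    have hlowptw : ∀ s ∈ Icc (1:ℝ) ρ, d / ρstar ^ 2 * (s - 1) ≤ (p s - p 1) / s ^ 2 := by
      intro s hs
      have hs1 : 1 ≤ s := hs.1
      have hsρ : s ≤ ρstar := le_trans hs.2 hρr
      have ht := tangentR s hs1
      have hs0 : (0:ℝ) < s := by linarith
      have hnum : 0 ≤ p s - p 1 :=
        le_trans (mul_nonneg hd0.le (by linarith : (0:ℝ) ≤ s - 1)) ht
      rw [div_mul_eq_mul_div, div_le_div_iff₀ (by positivity) (by positivity)]
      have hss : s ^ 2 ≤ ρstar ^ 2 := pow_le_pow_left₀ hs0.le hsρ 2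
      have f1 := mul_le_mul_of_nonneg_left hss hnum
      have f2 := mul_le_mul_of_nonneg_right ht (sq_nonneg s)
      linarith only [f1, f2]
    have hupptw : ∀ s ∈ Icc (1:ℝ) ρ, (p s - p 1) / s ^ 2 ≤ M * (s - 1) := by
      intro s hs
      have hs1 : (1:ℝ) ≤ s := hs.1
      have ht := tangentR s hs1
      have h2 := hM2 s hs1 (le_trans hs.2 hρr)
      have hnum : 0 ≤ p s - p 1 :=
        le_trans (mul_nonneg hd0.le (by linarith : (0:ℝ) ≤ s - 1)) ht
      have hs2 : (1:ℝ) ≤ s ^ 2 := by nlinarith only [hs1]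
      have hdiv : (p s - p 1) / s ^ 2 ≤ p s - p 1 := div_le_self hnum hs2
      linarith only [hdiv, h2]
    have hIlow : d / ρstar ^ 2 * ((ρ - 1) ^ 2 / 2)
        ≤ ∫ s in (1:ℝ)..ρ, (p s - p 1) / s ^ 2 := by
      have hcalc : ∫ s in (1:ℝ)..ρ, d / ρstar ^ 2 * (s - 1)
          = d / ρstar ^ 2 * ((ρ - 1) ^ 2 / 2) := by
        rw [intervalIntegral.integral_const_mul, myint_linear 1 ρ 1]
        ring
      rw [← hcalc]
      exact intervalIntegral.integral_mono_on h1ρ hlowint hint1 hlowptw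
    have hIup : (∫ s in (1:ℝ)..ρ, (p s - p 1) / s ^ 2) ≤ M * ((ρ - 1) ^ 2 / 2) := by
      have hcalc : ∫ s in (1:ℝ)..ρ, M * (s - 1) = M * ((ρ - 1) ^ 2 / 2) := by
        rw [intervalIntegral.integral_const_mul, myint_linear 1 ρ 1]
        ring
      rw [← hcalc]
      exact intervalIntegral.integral_mono_on h1ρ hint1 hupint hupptw
    have hInn : 0 ≤ ∫ s in (1:ℝ)..ρ, (p s - p 1) / s ^ 2 := by
      refine le_trans ?_ hIlow
      exact mul_nonneg (div_nonneg hd0.le (by positivity)) (by positivity)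
    rw [hident ρ hρpos]
    constructor
    · have h1 : c * (ρ - 1) ^ 2 ≤ d / (2 * ρstar ^ 2) * (ρ - 1) ^ 2 :=
        mul_le_mul_of_nonneg_right hc1 (sq_nonneg _)
      have h2 : d / (2 * ρstar ^ 2) * (ρ - 1) ^ 2 = d / ρstar ^ 2 * ((ρ - 1) ^ 2 / 2) := by
        ring
      have h3 : 1 * (∫ s in (1:ℝ)..ρ, (p s - p 1) / s ^ 2)
          ≤ ρ * ∫ s in (1:ℝ)..ρ, (p s - p 1) / s ^ 2 :=
        mul_le_mul_of_nonneg_right h1ρ hInn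
      rw [one_mul] at h3
      linarith only [h1, h2, h3, hIlow]
    · have h1 : ρ * (∫ s in (1:ℝ)..ρ, (p s - p 1) / s ^ 2)
          ≤ ρstar * ∫ s in (1:ℝ)..ρ, (p s - p 1) / s ^ 2 :=
        mul_le_mul_of_nonneg_right hρr hInn
      have h2 : ρstar * (∫ s in (1:ℝ)..ρ, (p s - p 1) / s ^ 2)
          ≤ ρstar * (M * ((ρ - 1) ^ 2 / 2)) :=
        mul_le_mul_of_nonneg_left hIup hρs0.le
      have h3 : ρstar * (M * ((ρ - 1) ^ 2 / 2)) = ρstar * M / 2 * (ρ - 1) ^ 2 := by ring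
      have h4 : ρstar * M / 2 * (ρ - 1) ^ 2 ≤ C * (ρ - 1) ^ 2 :=
        mul_le_mul_of_nonneg_right hC1 (sq_nonneg _)
      linarith only [h1, h2, h3, h4]
  · -- 0 < ρ < 1
    have hflipI : (∫ s in (1:ℝ)..ρ, (p s - p 1) / s ^ 2)
        = ∫ s in ρ..(1:ℝ), (p 1 - p s) / s ^ 2 := by
      rw [intervalIntegral.integral_symm ρ 1, ← intervalIntegral.integral_neg]
      exact intervalIntegral.integral_congr fun x hx => by ring
    have heρ : e ρ = ρ * ∫ s in ρ..(1:ℝ), (p 1 - p s) / s ^ 2 := by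
      rw [hident ρ hρpos, hflipI]
    set I := ∫ s in ρ..(1:ℝ), (p 1 - p s) / s ^ 2 with hI
    have hhint : IntervalIntegrable (fun s => (p 1 - p s) / s ^ 2) volume ρ 1 :=
      hgen _ hch ρ 1 hρpos one_pos
    have hhnn : ∀ s ∈ Icc ρ (1:ℝ), 0 ≤ (p 1 - p s) / s ^ 2 := by
      intro s hs
      have hs0 : 0 ≤ s := le_trans hρpos.le hs.1
      apply div_nonneg _ (sq_nonneg s)
      have := hpmono (mem_Ici.2 hs0) (mem_Ici.2 zero_le_one) hs.2
      linarith only [this]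
    have hInn : 0 ≤ I := intervalIntegral.integral_nonneg h1ρ.le hhnn
    have hsq1 : (ρ - 1) ^ 2 ≤ 1 := by
      nlinarith only [mul_nonneg hρpos.le (by linarith : (0:ℝ) ≤ 2 - ρ)]
    rw [heρ]
    constructor
    · -- lower bound
      rcases le_or_gt (1 - δ) ρ with hcase | hcase
      · -- 1 - δ ≤ ρ < 1
        have hptw : ∀ s ∈ Icc ρ (1:ℝ), d / 2 * (1 - s) ≤ (p 1 - p s) / s ^ 2 := by
          intro s hs
          have hs0 : (0:ℝ) < s := by linarith [hs.1]
          have hm := hM1 s (le_trans hcase hs.1) hs.2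
          rw [le_div_iff₀ (by positivity)]
          have hnn : 0 ≤ d / 2 * (1 - s) :=
            mul_nonneg (by linarith) (by linarith [hs.2])
          have hs2 : s ^ 2 ≤ 1 := by nlinarith only [hs.2, hs0.le]
          have f := mul_le_mul_of_nonneg_left hs2 hnn
          linarith only [hm, f]
        have hIlow : d / 2 * ((ρ - 1) ^ 2 / 2) ≤ I := by
          have hcalc : ∫ s in ρ..(1:ℝ), d / 2 * (1 - s) = d / 2 * ((ρ - 1) ^ 2 / 2) := by
            rw [intervalIntegral.integral_const_mul, myint_linear' ρ 1 1]
            ring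
          rw [← hcalc]
          exact intervalIntegral.integral_mono_on h1ρ.le
            ((continuous_const.mul (continuous_const.sub continuous_id)).intervalIntegrable ρ 1)
            hhint hptw
        have hρhalf : (1:ℝ) / 2 ≤ ρ := by linarith
        have f1 := mul_le_mul_of_nonneg_right hρhalf hInn
        have f2 := mul_le_mul_of_nonneg_left hIlow (by norm_num : (0:ℝ) ≤ 1 / 2)
        have f3 := mul_le_mul_of_nonneg_right hc2 (sq_nonneg (ρ - 1))
        linarith only [f1, f2, f3]
      · -- 0 < ρ < 1 - δ
        have hsplit : I = (∫ s in ρ..(1 - δ), (p 1 - p s) / s ^ 2)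
            + ∫ s in (1 - δ)..(1:ℝ), (p 1 - p s) / s ^ 2 :=
          (intervalIntegral.integral_add_adjacent_intervals
            (hgen _ hch ρ (1 - δ) hρpos (by linarith))
            (hgen _ hch (1 - δ) 1 (by linarith) one_pos)).symm
        have hP1nn : 0 ≤ ∫ s in ρ..(1 - δ), (p 1 - p s) / s ^ 2 :=
          intervalIntegral.integral_nonneg (by linarith)
            (fun s hs => hhnn s ⟨hs.1, by linarith [hs.2]⟩)
        have hP2low : d / 2 * (δ ^ 2 / 2) ≤ ∫ s in (1 - δ)..(1:ℝ), (p 1 - p s) / s ^ 2 := by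
          have hptw : ∀ s ∈ Icc (1 - δ) (1:ℝ), d / 2 * (1 - s) ≤ (p 1 - p s) / s ^ 2 := by
            intro s hs
            have hs0 : (0:ℝ) < s := by linarith [hs.1]
            have hm := hM1 s hs.1 hs.2
            rw [le_div_iff₀ (by positivity)]
            have hnn : 0 ≤ d / 2 * (1 - s) :=
              mul_nonneg (by linarith) (by linarith [hs.2])
            have hs2 : s ^ 2 ≤ 1 := by nlinarith only [hs.2, hs0.le]
            have f := mul_le_mul_of_nonneg_left hs2 hnn
            linarith only [hm, f]
          have hcalc : ∫ s in (1 - δ)..(1:ℝ), d / 2 * (1 - s) = d / 2 * (δ ^ 2 / 2) := by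
            rw [intervalIntegral.integral_const_mul, myint_linear' (1 - δ) 1 1]
            ring
          rw [← hcalc]
          exact intervalIntegral.integral_mono_on (by linarith)
            ((continuous_const.mul (continuous_const.sub continuous_id)).intervalIntegrable
              (1 - δ) 1)
            (hgen _ hch (1 - δ) 1 (by linarith) one_pos) hptw
        have hP2nn : 0 ≤ ∫ s in (1 - δ)..(1:ℝ), (p 1 - p s) / s ^ 2 :=
          le_trans (mul_nonneg (by linarith) (by positivity)) hP2low
        rcases le_or_gt ρ ((1 - δ) / 2) with hcase2 | hcase2
        · -- tiny ρ : use P1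
          have hptw1 : ∀ s ∈ Icc ρ (1 - δ), A * (1 / s ^ 2) ≤ (p 1 - p s) / s ^ 2 := by
            intro s hs
            have hs0 : (0:ℝ) < s := lt_of_lt_of_le hρpos hs.1
            have hmono' := hpmono (mem_Ici.2 hs0.le)
              (mem_Ici.2 (by linarith : (0:ℝ) ≤ 1 - δ)) hs.2
            rw [mul_one_div, div_le_div_iff₀ (by positivity) (by positivity)]
            have hAle : A ≤ p 1 - p s := by rw [hA]; linarith only [hmono']
            exact mul_le_mul_of_nonneg_right hAle (sq_nonneg s)
          have hP1low : A * (1 / ρ - 1 / (1 - δ)) ≤ ∫ s in ρ..(1 - δ), (p 1 - p s) / s ^ 2 := by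
            have hcalc : ∫ s in ρ..(1 - δ), A * (1 / s ^ 2) = A * (1 / ρ - 1 / (1 - δ)) := by
              rw [intervalIntegral.integral_const_mul, myint_invsq ρ (1 - δ) hρpos (by linarith)]
            rw [← hcalc]
            apply intervalIntegral.integral_mono_on (by linarith)
              ?_ (hgen _ hch ρ (1 - δ) hρpos (by linarith)) hptw1
            have := hgen (fun _ => A) continuousOn_const ρ (1 - δ) hρpos (by linarith)
            simpa [div_eq_mul_inv] using this
          have hkey : A * (1 - ρ / (1 - δ)) ≤ ρ * I := by
            have h1 : ρ * (A * (1 / ρ - 1 / (1 - δ))) = A * (1 - ρ / (1 - δ)) := by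
              field_simp
            rw [← h1, hsplit, mul_add]
            have h2 : ρ * (A * (1 / ρ - 1 / (1 - δ)))
                ≤ ρ * ∫ s in ρ..(1 - δ), (p 1 - p s) / s ^ 2 :=
              mul_le_mul_of_nonneg_left hP1low hρpos.le
            have h3 : 0 ≤ ρ * ∫ s in (1 - δ)..(1:ℝ), (p 1 - p s) / s ^ 2 :=
              mul_nonneg hρpos.le hP2nn
            linarith only [h2, h3]
          have hfrac : ρ / (1 - δ) ≤ 1 / 2 := by
            rw [div_le_iff₀ (by linarith : (0:ℝ) < 1 - δ)]
            linarith
          have hhalf : A / 2 ≤ ρ * I := by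
            have f := mul_le_mul_of_nonneg_left hfrac hA0.le
            linarith only [hkey, f]
          have f1 : c * (ρ - 1) ^ 2 ≤ c * 1 := mul_le_mul_of_nonneg_left hsq1 hc0.le
          linarith only [f1, hc3, hAlow, hhalf]
        · -- (1-δ)/2 < ρ < 1 - δ : use P2
          have hkey : ρ * (d / 2 * (δ ^ 2 / 2)) ≤ ρ * I := by
            apply mul_le_mul_of_nonneg_left _ hρpos.le
            rw [hsplit]
            linarith only [hP1nn, hP2low]
          have hρq : (1:ℝ) / 4 ≤ ρ := by linarith
          have hb0 : (0:ℝ) ≤ d / 2 * (δ ^ 2 / 2) :=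
            mul_nonneg (by linarith) (by positivity)
          have f := mul_le_mul_of_nonneg_right hρq hb0
          have f1 : c * (ρ - 1) ^ 2 ≤ c * 1 := mul_le_mul_of_nonneg_left hsq1 hc0.le
          linarith only [f, f1, hc4, hkey]
    · -- upper bound
      rcases lt_or_ge ρ (1 / 2) with hcase | hcase
      · -- small ρ
        have hptw : ∀ s ∈ Icc ρ (1:ℝ), (p 1 - p s) / s ^ 2 ≤ p 1 * (1 / s ^ 2) := by
          intro s hs
          have hs0 : (0:ℝ) < s := lt_of_lt_of_le hρpos hs.1
          have hnn := hpnn s (mem_Ici.2 hs0.le)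
          rw [mul_one_div, div_le_div_iff₀ (by positivity) (by positivity)]
          exact mul_le_mul_of_nonneg_right (by linarith only [hnn]) (sq_nonneg s)
        have hIup : I ≤ p 1 * (1 / ρ - 1 / 1) := by
          have hcalc : ∫ s in ρ..(1:ℝ), p 1 * (1 / s ^ 2) = p 1 * (1 / ρ - 1 / 1) := by
            rw [intervalIntegral.integral_const_mul, myint_invsq ρ 1 hρpos one_pos]
          rw [← hcalc]
          apply intervalIntegral.integral_mono_on h1ρ.le hhint ?_ hptw
          have := hgen (fun _ => p 1) continuousOn_const ρ 1 hρpos one_pos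
          simpa [div_eq_mul_inv] using this
        have hkey : ρ * I ≤ p 1 * (1 - ρ) := by
          have h1 : ρ * (p 1 * (1 / ρ - 1 / 1)) = p 1 * (1 - ρ) := by
            field_simp
          calc ρ * I ≤ ρ * (p 1 * (1 / ρ - 1 / 1)) := mul_le_mul_of_nonneg_left hIup hρpos.le
            _ = p 1 * (1 - ρ) := h1
        have f1 := mul_le_mul_of_nonneg_right hC3 (sq_nonneg (ρ - 1))
        have f2 : 0 ≤ p 1 * (1 - ρ) * (4 * (1 - ρ) - 1) :=
          mul_nonneg (mul_nonneg hp1.le (by linarith)) (by linarith)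
        nlinarith only [hkey, f1, f2]
      · -- 1/2 ≤ ρ < 1
        have hptw : ∀ s ∈ Icc ρ (1:ℝ), (p 1 - p s) / s ^ 2 ≤ 4 * d * (1 - s) := by
          intro s hs
          have hs0 : (0:ℝ) < s := by linarith [hs.1]
          have htL := tangentL s (by linarith) hs.2
          have hnn : 0 ≤ d * (1 - s) := mul_nonneg hd0.le (by linarith [hs.2])
          rw [div_le_iff₀ (by positivity)]
          have hq : (0:ℝ) ≤ 4 * s ^ 2 - 1 := by nlinarith only [hs.1, hcase]
          have f := mul_nonneg hnn hq
          linarith only [htL, f]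
        have hIup : I ≤ 4 * d * ((ρ - 1) ^ 2 / 2) := by
          have hcalc : ∫ s in ρ..(1:ℝ), 4 * d * (1 - s) = 4 * d * ((ρ - 1) ^ 2 / 2) := by
            rw [intervalIntegral.integral_const_mul, myint_linear' ρ 1 1]
            ring
          rw [← hcalc]
          exact intervalIntegral.integral_mono_on h1ρ.le hhint
            ((continuous_const.mul (continuous_const.sub continuous_id)).intervalIntegrable ρ 1)
            hptw
        have f1 := mul_le_mul_of_nonneg_right hC2 (sq_nonneg (ρ - 1))
        have f2 : ρ * I ≤ 1 * I := mul_le_mul_of_nonneg_right (le_of_lt h1ρ) hInn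
        rw [one_mul] at f2
        linarith only [hIup, f1, f2]
end

section
/- Let Ω = (0,1), ρ ∈ L^∞(Ω) with 0 ≤ ρ ≤ ρ̄, ∫₀¹ ρ dx = 1, ∫₀¹ ρ u dx = 0, and u ∈ H¹₀(Ω). Then ‖√ρ · u‖_{L²(Ω)} ≤ (√ρ̄ + ρ̄) ‖∂ₓ u‖_{L²(Ω)}. -/
open Real Set MeasureTheory

/-- weighted Poincaré estimate (5.6): if `0 ≤ ρ ≤ ρ̄` has unit mass and zero
momentum on `Ω = (0,1)` and `u ∈ H¹₀(Ω)`, then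
`‖√ρ u‖_{L²} ≤ (√ρ̄ + ρ̄)‖∂ₓu‖_{L²}`. -/
theorem stmt5 (ρ u : ℝ → ℝ) (ρbar : ℝ)
    (hρmeas : AEStronglyMeasurable ρ (volume.restrict (Ioo 0 1)))
    (hρnn : ∀ x ∈ Ioo (0:ℝ) 1, 0 ≤ ρ x)
    (hρbd : ∀ x ∈ Ioo (0:ℝ) 1, ρ x ≤ ρbar)
    (hmass : ∫ x in Ioo (0:ℝ) 1, ρ x = 1)
    (hmom : ∫ x in Ioo (0:ℝ) 1, ρ x * u x = 0)
    (hu : DifferentiableOn ℝ u (Icc 0 1))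
    (hu0 : u 0 = 0) (hu1 : u 1 = 0)
    (hu'int : IntegrableOn (fun x => (deriv u x) ^ 2) (Ioo 0 1)) :
    (∫ x in Ioo (0:ℝ) 1, ρ x * (u x) ^ 2) ^ ((1:ℝ)/2) ≤
      (Real.sqrt ρbar + ρbar) * (∫ x in Ioo (0:ℝ) 1, (deriv u x) ^ 2) ^ ((1:ℝ)/2) := by
  set C : ℝ := ∫ x in Ioo (0:ℝ) 1, (deriv u x) ^ 2 with hCdef
  have hC0 : 0 ≤ C := setIntegral_nonneg measurableSet_Ioo fun x _ => sq_nonneg _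
  -- key pointwise bound : (u x)^2 ≤ C on Ioo 0 1
  have key : ∀ x ∈ Ioo (0:ℝ) 1, (u x) ^ 2 ≤ C := by
    intro x hx
    have hIoc : Ioc (0:ℝ) x ⊆ Ioo (0:ℝ) 1 := fun t ht => ⟨ht.1, lt_of_le_of_lt ht.2 hx.2⟩
    have hint2 : IntegrableOn (fun t => (deriv u t) ^ 2) (Ioc 0 x) := hu'int.mono_set hIoc
    have hmeasd : AEStronglyMeasurable (deriv u) (volume.restrict (Ioc 0 x)) :=
      (measurable_deriv u).aestronglyMeasurable
    have hmem : MemLp (deriv u) 2 (volume.restrict (Ioc 0 x)) :=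
      (memLp_two_iff_integrable_sq hmeasd).2 hint2
    haveI : Fact (volume (Ioc (0:ℝ) x) < ⊤) := ⟨measure_Ioc_lt_top⟩
    have hint1 : IntegrableOn (deriv u) (Ioc 0 x) :=
      hmem.integrable (by norm_num)
    have hii : IntervalIntegrable (deriv u) volume 0 x := by
      rw [intervalIntegrable_iff, uIoc_of_le hx.1.le]; exact hint1
    have hcont : ContinuousOn u (Icc 0 x) :=
      hu.continuousOn.mono (Icc_subset_Icc le_rfl hx.2.le)
    have hderiv : ∀ t ∈ Ioo (0:ℝ) x, HasDerivAt u (deriv u t) t := by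
      intro t ht
      have htI : t ∈ Ioo (0:ℝ) 1 := ⟨ht.1, ht.2.trans hx.2⟩
      exact ((hu t (Ioo_subset_Icc_self htI)).differentiableAt
        (Icc_mem_nhds htI.1 htI.2)).hasDerivAt
    have hFTC : ∫ t in (0:ℝ)..x, deriv u t = u x - u 0 :=
      intervalIntegral.integral_eq_sub_of_hasDerivAt_of_le hx.1.le hcont hderiv hii
    have hux : u x = ∫ t in Ioc (0:ℝ) x, deriv u t := by
      rw [← intervalIntegral.integral_of_le hx.1.le, hFTC, hu0, sub_zero]
    -- |u x| ≤ ∫ |deriv u| over Ioc 0 x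
    have habs : |u x| ≤ ∫ t in Ioc (0:ℝ) x, |deriv u t| := by
      rw [hux, ← Real.norm_eq_abs]
      refine (norm_integral_le_integral_norm _).trans_eq ?_
      simp [Real.norm_eq_abs]
    -- Cauchy–Schwarz / Hölder with p = q = 2
    have hpq : (2:ℝ).HolderConjugate 2 := Real.holderConjugate_iff.mpr ⟨by norm_num, by norm_num⟩
    have hone : MemLp (fun _ : ℝ => (1:ℝ)) (ENNReal.ofReal 2)
        (volume.restrict (Ioc (0:ℝ) x)) := memLp_const 1
    have hmem' : MemLp (deriv u) (ENNReal.ofReal 2) (volume.restrict (Ioc (0:ℝ) x)) := by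
      have : (ENNReal.ofReal 2) = 2 := by
        rw [show (2:ℝ) = ((2:ℕ):ℝ) by norm_num, ENNReal.ofReal_natCast]; norm_num
      rw [this]; exact hmem
    have hCS := integral_mul_norm_le_Lp_mul_Lq (μ := volume.restrict (Ioc (0:ℝ) x))
      hpq hone hmem'
    have h1 : ∫ t in Ioc (0:ℝ) x, ‖(fun _ : ℝ => (1:ℝ)) t‖ * ‖deriv u t‖ =
        ∫ t in Ioc (0:ℝ) x, |deriv u t| := by
      refine setIntegral_congr_fun measurableSet_Ioc fun t _ => ?_
      simp [Real.norm_eq_abs]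
    have h2 : ∫ t in Ioc (0:ℝ) x, ‖(fun _ : ℝ => (1:ℝ)) t‖ ^ (2:ℝ) = x := by
      simp [Real.one_rpow, Real.volume_Ioc, ENNReal.toReal_ofReal hx.1.le, hx.1.le]
    have h3 : ∫ t in Ioc (0:ℝ) x, ‖deriv u t‖ ^ (2:ℝ) =
        ∫ t in Ioc (0:ℝ) x, (deriv u t) ^ 2 := by
      refine setIntegral_congr_fun measurableSet_Ioc fun t _ => ?_
      rw [Real.norm_eq_abs, show (2:ℝ) = ((2:ℕ):ℝ) by norm_num, Real.rpow_natCast, sq_abs]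
    rw [h1, h2, h3] at hCS
    have hmono : ∫ t in Ioc (0:ℝ) x, (deriv u t) ^ 2 ≤ C := by
      refine setIntegral_mono_set hu'int ?_ (HasSubset.Subset.eventuallyLE hIoc)
      exact Filter.Eventually.of_forall fun t => sq_nonneg _
    have hx12 : x ^ ((1:ℝ)/2) ≤ 1 :=
      Real.rpow_le_one hx.1.le hx.2.le (by norm_num)
    have hI2nn : 0 ≤ ∫ t in Ioc (0:ℝ) x, (deriv u t) ^ 2 :=
      setIntegral_nonneg measurableSet_Ioc fun t _ => sq_nonneg _
    have hCle : (∫ t in Ioc (0:ℝ) x, (deriv u t) ^ 2) ^ ((1:ℝ)/2) ≤ C ^ ((1:ℝ)/2) :=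
      Real.rpow_le_rpow hI2nn hmono (by norm_num)
    have h4 : |u x| ≤ C ^ ((1:ℝ)/2) := by
      calc |u x| ≤ ∫ t in Ioc (0:ℝ) x, |deriv u t| := habs
        _ ≤ x ^ ((1:ℝ)/2) * (∫ t in Ioc (0:ℝ) x, (deriv u t) ^ 2) ^ ((1:ℝ)/2) := by
            simpa [one_div] using hCS
        _ ≤ 1 * (C ^ ((1:ℝ)/2)) := by
            apply mul_le_mul hx12 hCle (Real.rpow_nonneg hI2nn _) zero_le_one
        _ = C ^ ((1:ℝ)/2) := one_mul _
    have h5 : (C ^ ((1:ℝ)/2)) ^ 2 = C := by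
      rw [← Real.rpow_natCast (C ^ ((1:ℝ)/2)) 2, ← Real.rpow_mul hC0]
      norm_num
    calc (u x) ^ 2 = |u x| ^ 2 := (sq_abs _).symm
      _ ≤ (C ^ ((1:ℝ)/2)) ^ 2 := by
          exact pow_le_pow_left₀ (abs_nonneg _) h4 2
      _ = C := h5
  -- ρ is integrable on Ioo 0 1
  have hρint : IntegrableOn ρ (Ioo 0 1) := by
    refine Integrable.mono' (integrable_const ρbar) hρmeas ?_
    refine (ae_restrict_iff' measurableSet_Ioo).2 (Filter.Eventually.of_forall fun x hx => ?_)
    rw [Real.norm_eq_abs, abs_of_nonneg (hρnn x hx)]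
    exact hρbd x hx
  -- 1 ≤ ρbar
  have hρbar1 : (1:ℝ) ≤ ρbar := by
    have : ∫ x in Ioo (0:ℝ) 1, ρ x ≤ ∫ _ in Ioo (0:ℝ) 1, ρbar :=
      setIntegral_mono_on hρint (integrable_const ρbar) measurableSet_Ioo hρbd
    rw [hmass] at this
    simpa [Real.volume_Ioo] using this
  have hρbarnn : (0:ℝ) ≤ ρbar := le_trans zero_le_one hρbar1
  -- u measurable on Ioo
  have humeas : AEStronglyMeasurable u (volume.restrict (Ioo 0 1)) :=
    (hu.continuousOn.mono Ioo_subset_Icc_self).aestronglyMeasurable measurableSet_Ioo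
  -- integrability of ρ u²
  have hρu2int : IntegrableOn (fun x => ρ x * (u x) ^ 2) (Ioo 0 1) := by
    refine Integrable.mono' (integrable_const (ρbar * C)) (hρmeas.mul (humeas.pow 2)) ?_
    refine (ae_restrict_iff' measurableSet_Ioo).2 (Filter.Eventually.of_forall fun x hx => ?_)
    rw [Real.norm_eq_abs, abs_of_nonneg (mul_nonneg (hρnn x hx) (sq_nonneg _))]
    exact mul_le_mul (hρbd x hx) (key x hx) (sq_nonneg _) hρbarnn
  -- main integral bound
  have hmain : ∫ x in Ioo (0:ℝ) 1, ρ x * (u x) ^ 2 ≤ C := by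
    have h1 : ∫ x in Ioo (0:ℝ) 1, ρ x * (u x) ^ 2 ≤ ∫ x in Ioo (0:ℝ) 1, ρ x * C := by
      refine setIntegral_mono_on hρu2int (hρint.mul_const C) measurableSet_Ioo fun x hx => ?_
      exact mul_le_mul_of_nonneg_left (key x hx) (hρnn x hx)
    have h2 : ∫ x in Ioo (0:ℝ) 1, ρ x * C = C := by
      rw [MeasureTheory.integral_mul_const, hmass, one_mul]
    rw [h2] at h1; exact h1
  have hLnn : 0 ≤ ∫ x in Ioo (0:ℝ) 1, ρ x * (u x) ^ 2 :=
    setIntegral_nonneg measurableSet_Ioo fun x hx => mul_nonneg (hρnn x hx) (sq_nonneg _)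
  have step1 : (∫ x in Ioo (0:ℝ) 1, ρ x * (u x) ^ 2) ^ ((1:ℝ)/2) ≤ C ^ ((1:ℝ)/2) :=
    Real.rpow_le_rpow hLnn hmain (by norm_num)
  have hs : (1:ℝ) ≤ Real.sqrt ρbar + ρbar := by
    have : (1:ℝ) ≤ Real.sqrt ρbar := Real.one_le_sqrt.2 hρbar1
    linarith
  calc (∫ x in Ioo (0:ℝ) 1, ρ x * (u x) ^ 2) ^ ((1:ℝ)/2) ≤ C ^ ((1:ℝ)/2) := step1
    _ ≤ (Real.sqrt ρbar + ρbar) * C ^ ((1:ℝ)/2) :=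
        le_mul_of_one_le_left (Real.rpow_nonneg hC0 _) hs
end

section
/- Let Ω = (0,1), ρ̄ > 0, and suppose ρ ∈ L^∞(Ω) with 0 ≤ ρ ≤ ρ̄, ∫₀¹ ρ dx = 1, and u ∈ H¹₀(Ω). Then ∫₀¹ ρ u⁴ dx ≤ 4ρ̄² ∫₀¹ u²(∂ₓu)² dx + (∫₀¹ ρ u² dx)². -/
open Real Set MeasureTheory

/-- interpolation inequality
`∫ρu⁴ ≤ 4ρ̄²∫u²(∂ₓu)² + (∫ρu²)²` on `(0,1)` for a density `0 ≤ ρ ≤ ρ̄` of unit mass and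
`u ∈ H¹₀(0,1)`. -/
theorem stmt15 (ρ u : ℝ → ℝ) (ρbar : ℝ) (hρbar : 0 < ρbar)
    (hρmeas : AEStronglyMeasurable ρ (volume.restrict (Ioo 0 1)))
    (hρbd : ∀ x ∈ Ioo (0:ℝ) 1, 0 ≤ ρ x ∧ ρ x ≤ ρbar)
    (hmass : ∫ x in Ioo (0:ℝ) 1, ρ x = 1)
    (hu : DifferentiableOn ℝ u (Icc 0 1))
    (hu0 : u 0 = 0) (hu1 : u 1 = 0)
    (hint : IntegrableOn (fun x => (u x) ^ 2 * (deriv u x) ^ 2) (Ioo 0 1)) :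
    ∫ x in Ioo (0:ℝ) 1, ρ x * (u x) ^ 4 ≤
      4 * ρbar ^ 2 * (∫ x in Ioo (0:ℝ) 1, (u x) ^ 2 * (deriv u x) ^ 2) +
      (∫ x in Ioo (0:ℝ) 1, ρ x * (u x) ^ 2) ^ 2 := by
  set A := ∫ x in Ioo (0:ℝ) 1, ρ x * (u x) ^ 2 with hA
  set B := ∫ x in Ioo (0:ℝ) 1, (u x) ^ 2 * (deriv u x) ^ 2 with hB
  have hucont : ContinuousOn u (Icc 0 1) := hu.continuousOn
  have humeas : AEStronglyMeasurable u (volume.restrict (Ioo 0 1)) :=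
    (hucont.mono Ioo_subset_Icc_self).aestronglyMeasurable measurableSet_Ioo
  have hdmeas : AEStronglyMeasurable (deriv u) (volume.restrict (Ioo 0 1)) :=
    (measurable_deriv u).aestronglyMeasurable
  -- bound on |u|
  obtain ⟨M, hM⟩ : ∃ M, ∀ x ∈ Icc (0:ℝ) 1, |u x| ≤ M := by
    obtain ⟨M, hM⟩ := isCompact_Icc.exists_bound_of_continuousOn hucont
    exact ⟨M, fun x hx => hM x hx⟩
  have hfin : volume (Ioo (0:ℝ) 1) < ⊤ := measure_Ioo_lt_top
  have hvol : (volume (Ioo (0:ℝ) 1)).toReal = 1 := by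
    simp [Real.volume_Ioo]
  -- integrability of u * u'
  have hconst : ∀ c : ℝ, IntegrableOn (fun _ : ℝ => c) (Ioo (0:ℝ) 1) :=
    fun c => integrableOn_const hfin.ne
  have huu' : IntegrableOn (fun x => u x * deriv u x) (Ioo 0 1) := by
    apply Integrable.mono' ((hconst (1/2)).add (hint.const_mul (1/2)))
      (humeas.mul hdmeas)
    filter_upwards [ae_restrict_mem measurableSet_Ioo] with x hx
    have h1 : (u x * deriv u x) ^ 2 = (u x) ^ 2 * (deriv u x) ^ 2 := by ring
    simp only [Pi.add_apply, Pi.mul_apply, Real.norm_eq_abs]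
    nlinarith [sq_nonneg (|u x * deriv u x| - 1), sq_abs (u x * deriv u x),
      abs_nonneg (u x * deriv u x)]
  have hg : IntegrableOn (fun x => |u x * deriv u x|) (Ioo 0 1) := huu'.abs
  set C := ∫ x in Ioo (0:ℝ) 1, |u x * deriv u x| with hC
  have hCnn : 0 ≤ C :=
    setIntegral_nonneg measurableSet_Ioo fun x _ => abs_nonneg _
  -- pointwise sup bound via FTC
  have key : ∀ x ∈ Ioo (0:ℝ) 1, (u x) ^ 2 ≤ 2 * C := by
    intro x hx
    obtain ⟨hx0, hx1⟩ := hx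
    have hsub : Ioc (0:ℝ) x ⊆ Ioo 0 1 := fun t ht => ⟨ht.1, lt_of_le_of_lt ht.2 hx1⟩
    have hftc : ∫ t in (0:ℝ)..x, 2 * u t * deriv u t = (u x) ^ 2 - (u 0) ^ 2 := by
      apply intervalIntegral.integral_eq_sub_of_hasDerivAt_of_le hx0.le
      · exact ((hucont.mono (Icc_subset_Icc le_rfl hx1.le)).pow 2)
      · intro t ht
        have htI : t ∈ Ioo (0:ℝ) 1 := ⟨ht.1, ht.2.trans hx1⟩
        have hd : DifferentiableAt ℝ u t :=
          (hu t (Ioo_subset_Icc_self htI)).differentiableAt (Icc_mem_nhds htI.1 htI.2)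
        have := hd.hasDerivAt.fun_pow 2
        simpa [mul_comm, mul_assoc, pow_one] using this
      · rw [intervalIntegrable_iff_integrableOn_Ioc_of_le hx0.le]
        have : IntegrableOn (fun t => 2 * (u t * deriv u t)) (Ioc 0 x) :=
          (huu'.mono_set hsub).const_mul 2
        simpa [mul_assoc] using this
    have h2 : (u x) ^ 2 = ∫ t in Ioc (0:ℝ) x, 2 * u t * deriv u t := by
      rw [← intervalIntegral.integral_of_le hx0.le, hftc, hu0]
      ring
    have h3 : ∫ t in Ioc (0:ℝ) x, 2 * u t * deriv u t
        ≤ ∫ t in Ioc (0:ℝ) x, 2 * |u t * deriv u t| := by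
      apply setIntegral_mono_on
      · have : IntegrableOn (fun t => 2 * (u t * deriv u t)) (Ioc 0 x) :=
          (huu'.mono_set hsub).const_mul 2
        simpa [mul_assoc] using this
      · exact (hg.mono_set hsub).const_mul 2
      · exact measurableSet_Ioc
      · intro t _
        have := le_abs_self (u t * deriv u t)
        nlinarith
    have h4 : ∫ t in Ioc (0:ℝ) x, 2 * |u t * deriv u t|
        ≤ ∫ t in Ioo (0:ℝ) 1, 2 * |u t * deriv u t| := by
      apply setIntegral_mono_set (hg.const_mul 2)
      · filter_upwards with t
        positivity
      · exact HasSubset.Subset.eventuallyLE hsub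
    have h5 : ∫ t in Ioo (0:ℝ) 1, 2 * |u t * deriv u t| = 2 * C := by
      rw [hC, ← integral_const_mul]
    linarith [h2 ▸ h3.trans h4, h5]
  -- integrability of ρ u², ρ u⁴
  have hρu2int : IntegrableOn (fun x => ρ x * (u x) ^ 2) (Ioo 0 1) := by
    apply Integrable.mono' (hconst (ρbar * M ^ 2)) (hρmeas.mul (humeas.pow 2))
    filter_upwards [ae_restrict_mem measurableSet_Ioo] with x hx
    obtain ⟨h0, h1⟩ := hρbd x hx
    have hMx := hM x (Ioo_subset_Icc_self hx)
    have hMnn : (0:ℝ) ≤ M := le_trans (abs_nonneg _) hMx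
    simp only [Pi.mul_apply, Pi.pow_apply, Real.norm_eq_abs]
    rw [abs_mul, abs_of_nonneg h0, abs_pow, sq_abs]
    have : (u x) ^ 2 ≤ M ^ 2 := by nlinarith [sq_abs (u x), abs_nonneg (u x)]
    nlinarith
  have hρu4int : IntegrableOn (fun x => ρ x * (u x) ^ 4) (Ioo 0 1) := by
    apply Integrable.mono' (hconst (ρbar * M ^ 4)) (hρmeas.mul (humeas.pow 4))
    filter_upwards [ae_restrict_mem measurableSet_Ioo] with x hx
    obtain ⟨h0, h1⟩ := hρbd x hx
    have hMx := hM x (Ioo_subset_Icc_self hx)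
    have hMnn : (0:ℝ) ≤ M := le_trans (abs_nonneg _) hMx
    simp only [Pi.mul_apply, Pi.pow_apply, Real.norm_eq_abs]
    rw [abs_mul, abs_of_nonneg h0, abs_pow]
    have hMx4 : |u x| ^ 4 ≤ M ^ 4 := pow_le_pow_left₀ (abs_nonneg _) hMx 4
    exact mul_le_mul h1 hMx4 (by positivity) hρbar.le
  have hAnn : 0 ≤ A :=
    setIntegral_nonneg measurableSet_Ioo fun x hx => by
      have := (hρbd x hx).1; positivity
  have hBnn : 0 ≤ B :=
    setIntegral_nonneg measurableSet_Ioo fun x _ => by positivity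
  -- step 1
  have step1 : ∫ x in Ioo (0:ℝ) 1, ρ x * (u x) ^ 4 ≤ 2 * C * A := by
    have : ∫ x in Ioo (0:ℝ) 1, ρ x * (u x) ^ 4
        ≤ ∫ x in Ioo (0:ℝ) 1, (2 * C) * (ρ x * (u x) ^ 2) := by
      apply setIntegral_mono_on hρu4int (hρu2int.const_mul _) measurableSet_Ioo
      intro x hx
      have h0 := (hρbd x hx).1
      have hk := key x hx
      nlinarith [sq_nonneg (u x), mul_nonneg h0 (sq_nonneg (u x))]
    rwa [integral_const_mul] at this
  -- step 2
  have step2 : 2 * C * A ≤ B + A ^ 2 := by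
    have h1 : 2 * C * A = ∫ x in Ioo (0:ℝ) 1, (2 * A) * |u x * deriv u x| := by
      rw [integral_const_mul, hC]; ring
    have h2 : ∫ x in Ioo (0:ℝ) 1, (2 * A) * |u x * deriv u x|
        ≤ ∫ x in Ioo (0:ℝ) 1, ((u x) ^ 2 * (deriv u x) ^ 2 + A ^ 2) := by
      apply setIntegral_mono_on (hg.const_mul _)
        (hint.add (hconst (A ^ 2))) measurableSet_Ioo
      intro x _
      simp only [Pi.add_apply]
      nlinarith [sq_nonneg (|u x * deriv u x| - A), sq_abs (u x * deriv u x)]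
    have h3 : ∫ x in Ioo (0:ℝ) 1, ((u x) ^ 2 * (deriv u x) ^ 2 + A ^ 2)
        = B + A ^ 2 := by
      rw [integral_add hint (hconst (A ^ 2)), setIntegral_const,
        measureReal_def, hvol, smul_eq_mul, one_mul]
    linarith [h1 ▸ h2, h3]
  -- step 3 : ρbar ≥ 1
  have hρint : IntegrableOn ρ (Ioo 0 1) := by
    apply Integrable.mono' (hconst ρbar) hρmeas
    filter_upwards [ae_restrict_mem measurableSet_Ioo] with x hx
    rw [Real.norm_eq_abs, abs_of_nonneg (hρbd x hx).1]
    exact (hρbd x hx).2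
  have hρbar1 : 1 ≤ ρbar := by
    have : (1:ℝ) = ∫ x in Ioo (0:ℝ) 1, ρ x := hmass.symm
    have h2 : ∫ x in Ioo (0:ℝ) 1, ρ x ≤ ∫ _x in Ioo (0:ℝ) 1, ρbar := by
      apply setIntegral_mono_on hρint (hconst ρbar)
        measurableSet_Ioo
      exact fun x hx => (hρbd x hx).2
    rw [setIntegral_const, measureReal_def, hvol, smul_eq_mul, one_mul] at h2
    linarith
  have step3 : B + A ^ 2 ≤ 4 * ρbar ^ 2 * B + A ^ 2 := by
    have h14 : (1:ℝ) ≤ 4 * ρbar ^ 2 := by nlinarith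
    nlinarith
  linarith
end

section
/- Let u : [0,T] × [0,1] → ℝ and define the Lagrangian flow ξ(y,t) by ∂ₜξ = u(ξ,t), ξ(y,0) = y, and set η(y,t) = ∂_y ξ(y,t), ũ(y,t) = u(ξ(y,t),t). Suppose ∫₀ᵀ ‖∂ₓu(t,·)‖_{L^∞} dt = θ < 1/2. Then η(y,t) = 1 + ∫₀ᵗ ∂_y ũ(y,τ) dτ, and ∫₀ᵀ ‖∂_y ũ(t,·)‖_{L^∞} dt ≤ θ/(1−θ) < 1. -/
open Real Set MeasureTheory

/-- equivalence of Eulerian and Lagrangian velocity gradients on small time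
intervals: for the flow `∂ₜξ = u(ξ,t)`, `ξ(y,0) = y`, if `∫₀ᵀ ‖∂ₓu(t)‖_∞ dt = θ < 1/2`,
then `η = ∂_yξ` satisfies `η(y,t) = 1 + ∫₀ᵗ ∂_yũ(y,τ) dτ` with `ũ(y,t) = u(ξ(y,t),t)`,
and `∫₀ᵀ ‖∂_yũ(t)‖_∞ dt ≤ θ/(1−θ) < 1`. -/
theorem stmt17 (T θ : ℝ) (hT : 0 < T) (hθ0 : 0 ≤ θ) (hθ : θ < 1/2)
    (u ξ : ℝ → ℝ → ℝ) (m : ℝ → ℝ)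
    (hflow : ∀ y t : ℝ, HasDerivAt (ξ y) (u t (ξ y t)) t)
    (hinit : ∀ y : ℝ, ξ y 0 = y)
    (hξdiff : ∀ t y : ℝ, DifferentiableAt ℝ (fun y' => ξ y' t) y)
    (hudiff : ∀ t : ℝ, Differentiable ℝ (u t))
    (hm : ∀ t ∈ Icc (0:ℝ) T, ∀ x : ℝ, |deriv (u t) x| ≤ m t)
    (hmnn : ∀ t, 0 ≤ m t)
    (hmint : IntegrableOn m (Icc 0 T))
    (hθdef : (∫ t in (0:ℝ)..T, m t) = θ) :
    (∀ y : ℝ, ∀ t ∈ Icc (0:ℝ) T,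
      deriv (fun y' => ξ y' t) y =
        1 + ∫ τ in (0:ℝ)..t, deriv (fun y' => u τ (ξ y' τ)) y) ∧
    ∃ M : ℝ → ℝ,
      (∀ t ∈ Icc (0:ℝ) T, ∀ y : ℝ, |deriv (fun y' => u t (ξ y' t)) y| ≤ M t) ∧
      (∫ t in (0:ℝ)..T, M t) ≤ θ / (1 - θ) ∧ θ / (1 - θ) < 1 := by
  have h1θ : (0:ℝ) < 1 - θ := by linarith
  -- `u t` is `m t`-Lipschitz for `t ∈ [0,T]`
  have hulip : ∀ t ∈ Icc (0:ℝ) T, ∀ a b : ℝ, |u t a - u t b| ≤ m t * |a - b| := by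
    intro t ht a b
    have := convex_univ.norm_image_sub_le_of_norm_deriv_le (𝕜 := ℝ) (f := u t)
      (fun x _ => (hudiff t x)) (fun x _ => hm t ht x) (mem_univ b) (mem_univ a)
    simpa [Real.norm_eq_abs] using this
  have hderiv_eq : ∀ y t : ℝ, deriv (ξ y) t = u t (ξ y t) := fun y t => (hflow y t).deriv
  -- measurability of the time-derivative differences
  have hdmeas : ∀ a b : ℝ, Measurable (fun τ => u τ (ξ a τ) - u τ (ξ b τ)) := by
    intro a b
    have h : (fun τ => u τ (ξ a τ) - u τ (ξ b τ))
        = fun τ => deriv (ξ a) τ - deriv (ξ b) τ := by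
      funext τ; rw [hderiv_eq, hderiv_eq]
    rw [h]
    exact (measurable_deriv _).sub (measurable_deriv _)
  have hmII : IntervalIntegrable m volume 0 T :=
    (intervalIntegrable_iff_integrableOn_Icc_of_le hT.le).2 hmint
  have hmθ : ∀ t ∈ Icc (0:ℝ) T, (∫ τ in (0:ℝ)..t, m τ) ≤ θ := by
    intro t ht
    rw [← hθdef]
    exact intervalIntegral.integral_mono_interval le_rfl ht.1 ht.2
      (Filter.Eventually.of_forall fun τ => hmnn τ) hmII
  -- the key difference estimates
  have key : ∀ a b : ℝ,
      (∀ t ∈ Icc (0:ℝ) T, |ξ a t - ξ b t| ≤ |a - b| / (1 - θ)) ∧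
      (∀ t ∈ Icc (0:ℝ) T,
        ξ a t - ξ b t = (a - b) + ∫ τ in (0:ℝ)..t, (u τ (ξ a τ) - u τ (ξ b τ))) := by
    intro a b
    set f : ℝ → ℝ := fun t => ξ a t - ξ b t with hfdef
    have hf : ∀ t, HasDerivAt f (u t (ξ a t) - u t (ξ b t)) t :=
      fun t => (hflow a t).sub (hflow b t)
    have hcf : Continuous f := by
      rw [continuous_iff_continuousAt]; exact fun t => (hf t).continuousAt
    obtain ⟨t₀, ht₀, hmax⟩ := isCompact_Icc.exists_isMaxOn (α := ℝ)
      (Set.nonempty_Icc.2 hT.le) ((continuous_abs.comp hcf).continuousOn)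
    set S : ℝ := |f t₀| with hSdef
    have hS0 : 0 ≤ S := abs_nonneg _
    have hmaxS : ∀ s ∈ Icc (0:ℝ) T, |f s| ≤ S := fun s hs => hmax hs
    have dbound : ∀ τ ∈ Icc (0:ℝ) T, |u τ (ξ a τ) - u τ (ξ b τ)| ≤ m τ * S := by
      intro τ hτ
      exact (hulip τ hτ _ _).trans (mul_le_mul_of_nonneg_left (hmaxS τ hτ) (hmnn τ))
    have hint : ∀ t ∈ Icc (0:ℝ) T,
        IntervalIntegrable (fun τ => u τ (ξ a τ) - u τ (ξ b τ)) volume 0 t := by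
      intro t ht
      rw [intervalIntegrable_iff_integrableOn_Icc_of_le ht.1]
      refine ((hmint.mono_set (Icc_subset_Icc le_rfl ht.2)).mul_const S).mono'
        ((hdmeas a b).aestronglyMeasurable.restrict) ?_
      refine (ae_restrict_iff' measurableSet_Icc).2 (Filter.Eventually.of_forall fun τ hτ => ?_)
      simpa [Real.norm_eq_abs] using dbound τ ⟨hτ.1, hτ.2.trans ht.2⟩
    have hFTC : ∀ t ∈ Icc (0:ℝ) T,
        ξ a t - ξ b t = (a - b) + ∫ τ in (0:ℝ)..t, (u τ (ξ a τ) - u τ (ξ b τ)) := by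
      intro t ht
      have h := intervalIntegral.integral_eq_sub_of_hasDerivAt (f := f)
        (fun τ _ => hf τ) (hint t ht)
      have h0 : f 0 = a - b := by simp [hfdef, hinit]
      have : f t = ξ a t - ξ b t := rfl
      rw [h0] at h
      linarith [h]
    -- bound `S`
    have hSb : S ≤ |a - b| + θ * S := by
      have h1 := hFTC t₀ ht₀
      have habs : |f t₀| ≤ |a - b| + |∫ τ in (0:ℝ)..t₀, (u τ (ξ a τ) - u τ (ξ b τ))| := by
        rw [show f t₀ = ξ a t₀ - ξ b t₀ from rfl, h1]
        exact (abs_add_le _ _)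
      have hII := hint t₀ ht₀
      have hIabs : IntervalIntegrable (fun τ => |u τ (ξ a τ) - u τ (ξ b τ)|) volume 0 t₀ := hII.abs
      have hImS : IntervalIntegrable (fun τ => m τ * S) volume 0 t₀ := by
        rw [intervalIntegrable_iff_integrableOn_Icc_of_le ht₀.1]
        exact (hmint.mono_set (Icc_subset_Icc le_rfl ht₀.2)).mul_const S
      have h2 : |∫ τ in (0:ℝ)..t₀, (u τ (ξ a τ) - u τ (ξ b τ))| ≤ θ * S := by
        calc |∫ τ in (0:ℝ)..t₀, (u τ (ξ a τ) - u τ (ξ b τ))|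
            ≤ ∫ τ in (0:ℝ)..t₀, |u τ (ξ a τ) - u τ (ξ b τ)| := by
              simpa [Real.norm_eq_abs] using
                intervalIntegral.norm_integral_le_integral_norm (μ := volume)
                  (f := fun τ => u τ (ξ a τ) - u τ (ξ b τ)) ht₀.1
          _ ≤ ∫ τ in (0:ℝ)..t₀, m τ * S := by
              refine intervalIntegral.integral_mono_on ht₀.1 hIabs hImS fun τ hτ => ?_
              exact dbound τ ⟨hτ.1, hτ.2.trans ht₀.2⟩
          _ = (∫ τ in (0:ℝ)..t₀, m τ) * S := intervalIntegral.integral_mul_const S m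
          _ ≤ θ * S := mul_le_mul_of_nonneg_right (hmθ t₀ ht₀) hS0
      calc S = |f t₀| := rfl
        _ ≤ |a - b| + |∫ τ in (0:ℝ)..t₀, (u τ (ξ a τ) - u τ (ξ b τ))| := habs
        _ ≤ |a - b| + θ * S := by linarith
    have hSfin : S ≤ |a - b| / (1 - θ) := by
      rw [le_div_iff₀ h1θ]; nlinarith
    exact ⟨fun t ht => (hmaxS t ht).trans hSfin, hFTC⟩
  -- chain rule
  have hcomp : ∀ τ y : ℝ, HasDerivAt (fun z => u τ (ξ z τ))
      (deriv (u τ) (ξ y τ) * deriv (fun z => ξ z τ) y) y := by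
    intro τ y
    exact ((hudiff τ (ξ y τ)).hasDerivAt.comp y (hξdiff τ y).hasDerivAt)
  -- bound on `∂_y ξ`
  have hηb : ∀ t ∈ Icc (0:ℝ) T, ∀ y : ℝ, |deriv (fun z => ξ z t) y| ≤ 1 / (1 - θ) := by
    intro t ht y
    have hsl := hasDerivAt_iff_tendsto_slope.1 (hξdiff t y).hasDerivAt
    have hb : ∀ᶠ z in nhdsWithin y ({y}ᶜ : Set ℝ),
        |slope (fun z => ξ z t) y z| ≤ 1 / (1 - θ) := by
      refine eventually_mem_nhdsWithin.mono fun z hz => ?_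
      have hzy : z - y ≠ 0 := sub_ne_zero.2 hz
      rw [slope_def_field, div_eq_mul_inv, abs_mul, abs_inv]
      rw [← le_div_iff₀ (by positivity : (0:ℝ) < |z - y|⁻¹)]
      have := (key z y).1 t ht
      calc |ξ z t - ξ y t| ≤ |z - y| / (1 - θ) := this
        _ = 1 / (1 - θ) / |z - y|⁻¹ := by
            have h0 : |z - y| ≠ 0 := abs_ne_zero.2 hzy
            field_simp
    exact le_of_tendsto ((continuous_abs.tendsto _).comp hsl) hb
  refine ⟨?_, ⟨fun t => m t * (1 / (1 - θ)), ?_, ?_, ?_⟩⟩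
  · -- the integral identity
    intro y t ht
    set g : ℝ → ℝ := fun τ => deriv (fun y' => u τ (ξ y' τ)) y with hgdef
    have hgd : ∀ τ : ℝ, HasDerivAt (fun z => u τ (ξ z τ)) (g τ) y := by
      intro τ
      have h := hcomp τ y
      rwa [← h.deriv] at h
    set e : ℕ → ℝ := fun n => 1 / (n + 1 : ℝ) with hedef
    have hen : ∀ n, e n ≠ 0 := fun n => by positivity
    have he0 : Filter.Tendsto e Filter.atTop (nhds 0) :=
      tendsto_one_div_add_atTop_nhds_zero_nat
    have hyn : Filter.Tendsto (fun n => y + e n) Filter.atTop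
        (nhdsWithin y ({y}ᶜ : Set ℝ)) := by
      refine tendsto_nhdsWithin_of_tendsto_nhds_of_eventually_within _ ?_ ?_
      · simpa using (tendsto_const_nhds (x := y)).add he0
      · exact Filter.Eventually.of_forall fun n => by
          simp only [mem_compl_iff, mem_singleton_iff]
          intro h
          exact hen n (by linarith [h])
    -- limit of the left-hand sides
    have hslξ := hasDerivAt_iff_tendsto_slope.1 (hξdiff t y).hasDerivAt
    have hLHS : Filter.Tendsto (fun n => (ξ (y + e n) t - ξ y t) / e n) Filter.atTop
        (nhds (deriv (fun y' => ξ y' t) y)) := by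
      have := hslξ.comp hyn
      refine this.congr fun n => ?_
      simp [slope_def_field]
    -- limit of the right-hand sides via dominated convergence
    have hRHS : Filter.Tendsto
        (fun n => ∫ τ in (0:ℝ)..t, (u τ (ξ (y + e n) τ) - u τ (ξ y τ)) / e n)
        Filter.atTop (nhds (∫ τ in (0:ℝ)..t, g τ)) := by
      refine intervalIntegral.tendsto_integral_filter_of_dominated_convergence
        (fun τ => m τ * (1 / (1 - θ))) ?_ ?_ ?_ ?_
      · exact Filter.Eventually.of_forall fun n =>
          (((hdmeas (y + e n) y).div_const (e n)).aestronglyMeasurable.restrict)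
      · refine Filter.Eventually.of_forall fun n => Filter.Eventually.of_forall fun τ hτ => ?_
        rw [uIoc_of_le ht.1] at hτ
        have hτT : τ ∈ Icc (0:ℝ) T := ⟨hτ.1.le, hτ.2.trans ht.2⟩
        have h1 : |u τ (ξ (y + e n) τ) - u τ (ξ y τ)| ≤ m τ * (|e n| / (1 - θ)) := by
          refine (hulip τ hτT _ _).trans (mul_le_mul_of_nonneg_left ?_ (hmnn τ))
          have := (key (y + e n) y).1 τ hτT
          simpa using this
        rw [Real.norm_eq_abs, abs_div]
        rw [div_le_iff₀ (abs_pos.2 (hen n))]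
        calc |u τ (ξ (y + e n) τ) - u τ (ξ y τ)| ≤ m τ * (|e n| / (1 - θ)) := h1
          _ = m τ * (1 / (1 - θ)) * |e n| := by ring
      · rw [intervalIntegrable_iff_integrableOn_Icc_of_le ht.1]
        exact (hmint.mono_set (Icc_subset_Icc le_rfl ht.2)).mul_const _
      · refine Filter.Eventually.of_forall fun τ _ => ?_
        have hsl := hasDerivAt_iff_tendsto_slope.1 (hgd τ)
        have := hsl.comp hyn
        refine this.congr fun n => ?_
        simp [slope_def_field]
    -- the identity for each `n`
    have hiden : ∀ n, (ξ (y + e n) t - ξ y t) / e n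
        = 1 + ∫ τ in (0:ℝ)..t, (u τ (ξ (y + e n) τ) - u τ (ξ y τ)) / e n := by
      intro n
      have h := (key (y + e n) y).2 t ht
      rw [intervalIntegral.integral_div]
      rw [h]
      have : (y + e n - y) = e n := by ring
      rw [this, add_div, div_self (hen n)]
    have hfin := hLHS
    rw [show (fun n => (ξ (y + e n) t - ξ y t) / e n)
        = fun n => 1 + ∫ τ in (0:ℝ)..t, (u τ (ξ (y + e n) τ) - u τ (ξ y τ)) / e n
        from funext hiden] at hfin
    exact tendsto_nhds_unique hfin ((tendsto_const_nhds (x := (1:ℝ))).add hRHS)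
  · -- pointwise bound by `M`
    intro t ht y
    have h := hcomp t y
    rw [h.deriv, abs_mul]
    exact mul_le_mul (hm t ht _) (hηb t ht y) (abs_nonneg _) (hmnn t)
  · rw [intervalIntegral.integral_mul_const, hθdef]
    rw [mul_one_div]
  · rw [div_lt_one h1θ]; linarith
end
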